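/- arXiv:1812.03783 — 6 statements merged into one kernel-verified Lean document; each statement's English description precedes it below -/
import Mathlib

section
/- Let Λ and Λ̄ be finite Borel measures on [0,1] with Λ({0}) = Λ̄({0}) = 0, let c, c̄, K ≥ 0, let x, y ∈ [0,1] and let n, m ≥ 1 be integers. Then ∫_{(0,1]} (((1−z)x+zy)^n y^m − x^n y^m) z^{−1} Λ(dz) + ∫_{(0,1]} (x^n ((1−z)y+zx)^m − x^n y^m) z^{−1} Λ̄(dz) + c(y−x)·n x^{n−1} y^m + c̄K(x−y)·m x^n y^{m−1} + (1/2) x(1−x) n(n−1) x^{n−2} y^m equals ∑_{k=2}^{n} C(n,k) (∫_{(0,1]} z^{k−1}(1−z)^{n−k} Λ(dz)) (x^{n−k} y^{m+k} − x^n y^m) + ∑_{l=2}^{m} C(m,l) (∫_{(0,1]} z^{l−1}(1−z)^{m−l} Λ̄(dz)) (x^{n+l} y^{m−l} − x^n y^m) + n (c + ∫_{(0,1]} (1−z)^{n−1} Λ(dz)) (x^{n−1} y^{m+1} − x^n y^m) + m (c̄K + ∫_{(0,1]} (1−z)^{m−1} Λ̄(dz)) (x^{n+1} y^{m−1} − x^n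 y^m) + C(n,2) (x^{n−1} y^m − x^n y^m), with all integrals finite (for n = 1 the term with factor n(n−1) is zero, so x^{n−2} never occurs with nonzero coefficient). -/
open MeasureTheory Set

lemma aux_sum (x y z : ℝ) (n m : ℕ) :
    ∑ k ∈ Finset.range (n+1), (n.choose k : ℝ) * (z^k * (1-z)^(n-k))
        * (x^(n-k) * y^(m+k) - x^n * y^m)
      = ((1-z)*x + z*y)^n * y^m - x^n * y^m := by
  have h1 : ((1-z)*x + z*y)^n * y^m
      = ∑ k ∈ Finset.range (n+1),
          (n.choose k : ℝ) * (z^k * (1-z)^(n-k)) * (x^(n-k) * y^(m+k)) := by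
    rw [add_comm ((1-z)*x) (z*y), add_pow, Finset.sum_mul]
    refine Finset.sum_congr rfl fun k hk => ?_
    rw [mul_pow, mul_pow, pow_add]
    ring
  have h2 : (x^n * y^m : ℝ)
      = ∑ k ∈ Finset.range (n+1),
          (n.choose k : ℝ) * (z^k * (1-z)^(n-k)) * (x^n * y^m) := by
    have hone : (1:ℝ) = ∑ k ∈ Finset.range (n+1), z^k * (1-z)^(n-k) * (n.choose k : ℝ) := by
      have h := add_pow z (1-z) n
      rw [show z + (1-z) = (1:ℝ) by ring, one_pow] at h
      exact h
    calc (x^n * y^m : ℝ) = 1 * (x^n * y^m) := by ring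
      _ = (∑ k ∈ Finset.range (n+1), z^k * (1-z)^(n-k) * (n.choose k : ℝ)) * (x^n * y^m) := by
          rw [← hone]
      _ = _ := by
          rw [Finset.sum_mul]
          exact Finset.sum_congr rfl fun k hk => by ring
  calc ∑ k ∈ Finset.range (n+1), (n.choose k : ℝ) * (z^k * (1-z)^(n-k))
        * (x^(n-k) * y^(m+k) - x^n * y^m)
      = (∑ k ∈ Finset.range (n+1),
          (n.choose k : ℝ) * (z^k * (1-z)^(n-k)) * (x^(n-k) * y^(m+k)))
        - ∑ k ∈ Finset.range (n+1),
            (n.choose k : ℝ) * (z^k * (1-z)^(n-k)) * (x^n * y^m) := by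
        rw [← Finset.sum_sub_distrib]
        exact Finset.sum_congr rfl fun k hk => by ring
    _ = ((1-z)*x + z*y)^n * y^m - x^n * y^m := by rw [← h1, ← h2]

lemma aux_expand (x y z : ℝ) (n m : ℕ) (hn : 1 ≤ n) (hz : z ≠ 0) :
    (((1-z)*x + z*y)^n * y^m - x^n * y^m) / z
      = ∑ k ∈ Finset.Icc 1 n, (n.choose k : ℝ) * (z^(k-1) * (1-z)^(n-k))
          * (x^(n-k) * y^(m+k) - x^n * y^m) := by
  rw [div_eq_iff hz, ← aux_sum x y z n m, Finset.sum_range_succ']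
  have h0 : (n.choose 0 : ℝ) * (z^0 * (1-z)^(n-0)) * (x^(n-0) * y^(m+0) - x^n * y^m) = 0 := by
    simp
  rw [h0, add_zero]
  rw [show Finset.Icc 1 n = Finset.Ico 1 (n+1) from (Finset.Ico_add_one_right_eq_Icc 1 n).symm,
    Finset.sum_Ico_eq_sum_range, show n + 1 - 1 = n by omega, Finset.sum_mul]
  refine Finset.sum_congr rfl fun i hi => ?_
  rw [show 1 + i = i + 1 from Nat.add_comm 1 i, show i + 1 - 1 = i from by omega,
    pow_succ]
  ring

lemma aux_int (μ : Measure ℝ) [IsFiniteMeasure μ] (a b : ℕ) :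
    IntegrableOn (fun z : ℝ => z^a * (1-z)^b) (Set.Ioc 0 1) μ := by
  apply Measure.integrableOn_of_bounded (M := 1) (measure_ne_top μ _)
    (Continuous.aestronglyMeasurable (by continuity))
  filter_upwards [ae_restrict_mem measurableSet_Ioc] with z hz
  rw [Real.norm_eq_abs, abs_mul, abs_pow, abs_pow]
  have h1 : |z| ≤ 1 := abs_le.2 ⟨by linarith [hz.1], hz.2⟩
  have h2 : |1 - z| ≤ 1 := abs_le.2 ⟨by linarith [hz.2], by linarith [hz.1.le]⟩
  exact mul_le_one₀ (pow_le_one₀ (abs_nonneg _) h1) (pow_nonneg (abs_nonneg _) _)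
    (pow_le_one₀ (abs_nonneg _) h2)

lemma aux_int' (μ : Measure ℝ) [IsFiniteMeasure μ] (a b : ℕ) (C D : ℝ) :
    IntegrableOn (fun z : ℝ => C * (z^a * (1-z)^b) * D) (Set.Ioc 0 1) μ :=
  ((aux_int μ a b).const_mul C).mul_const D

/-- Generator duality identity: the generator of the seed bank diffusion with jumps applied
to `f(x,y) = x^n y^m` equals the generator of the block-counting process of the seed bank
coalescent with simultaneous switching applied to `(n,m) ↦ x^n y^m`. -/
theorem stmt1 (Λ Λbar : Measure ℝ) [IsFiniteMeasure Λ] [IsFiniteMeasure Λbar]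
    (hΛsupp : Λ (Set.Icc (0:ℝ) 1)ᶜ = 0) (hΛ0 : Λ {0} = 0)
    (hΛbsupp : Λbar (Set.Icc (0:ℝ) 1)ᶜ = 0) (hΛb0 : Λbar {0} = 0)
    (c cbar K : ℝ) (hc : 0 ≤ c) (hcbar : 0 ≤ cbar) (hK : 0 ≤ K)
    (x y : ℝ) (hx : x ∈ Set.Icc (0:ℝ) 1) (hy : y ∈ Set.Icc (0:ℝ) 1)
    (n m : ℕ) (hn : 1 ≤ n) (hm : 1 ≤ m) :
    IntegrableOn
      (fun z : ℝ => (((1 - z) * x + z * y) ^ n * y ^ m - x ^ n * y ^ m) / z)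
      (Set.Ioc 0 1) Λ ∧
    IntegrableOn
      (fun z : ℝ => (x ^ n * ((1 - z) * y + z * x) ^ m - x ^ n * y ^ m) / z)
      (Set.Ioc 0 1) Λbar ∧
    (∫ z in Set.Ioc (0:ℝ) 1, (((1 - z) * x + z * y) ^ n * y ^ m - x ^ n * y ^ m) / z ∂Λ)
      + (∫ z in Set.Ioc (0:ℝ) 1, (x ^ n * ((1 - z) * y + z * x) ^ m - x ^ n * y ^ m) / z ∂Λbar)
      + c * (y - x) * n * x ^ (n - 1) * y ^ m
      + cbar * K * (x - y) * m * x ^ n * y ^ (m - 1)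
      + (1 / 2) * x * (1 - x) * n * ((n : ℝ) - 1) * x ^ (n - 2) * y ^ m
    = (∑ k ∈ Finset.Icc 2 n, (n.choose k : ℝ)
          * (∫ z in Set.Ioc (0:ℝ) 1, z ^ (k - 1) * (1 - z) ^ (n - k) ∂Λ)
          * (x ^ (n - k) * y ^ (m + k) - x ^ n * y ^ m))
      + (∑ l ∈ Finset.Icc 2 m, (m.choose l : ℝ)
          * (∫ z in Set.Ioc (0:ℝ) 1, z ^ (l - 1) * (1 - z) ^ (m - l) ∂Λbar)
          * (x ^ (n + l) * y ^ (m - l) - x ^ n * y ^ m))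
      + (n : ℝ) * (c + ∫ z in Set.Ioc (0:ℝ) 1, (1 - z) ^ (n - 1) ∂Λ)
          * (x ^ (n - 1) * y ^ (m + 1) - x ^ n * y ^ m)
      + (m : ℝ) * (cbar * K + ∫ z in Set.Ioc (0:ℝ) 1, (1 - z) ^ (m - 1) ∂Λbar)
          * (x ^ (n + 1) * y ^ (m - 1) - x ^ n * y ^ m)
      + (n.choose 2 : ℝ) * (x ^ (n - 1) * y ^ m - x ^ n * y ^ m) := by
  -- pointwise identities for the integrands
  have hg1 : Set.EqOn
      (fun z : ℝ => (((1 - z) * x + z * y) ^ n * y ^ m - x ^ n * y ^ m) / z)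
      (fun z : ℝ => ∑ k ∈ Finset.Icc 1 n, (n.choose k : ℝ) * (z^(k-1) * (1-z)^(n-k))
          * (x^(n-k) * y^(m+k) - x^n * y^m)) (Set.Ioc 0 1) :=
    fun z hz => aux_expand x y z n m hn hz.1.ne'
  have hg2 : Set.EqOn
      (fun z : ℝ => (x ^ n * ((1 - z) * y + z * x) ^ m - x ^ n * y ^ m) / z)
      (fun z : ℝ => ∑ l ∈ Finset.Icc 1 m, (m.choose l : ℝ) * (z^(l-1) * (1-z)^(m-l))
          * (x^(n+l) * y^(m-l) - x^n * y^m)) (Set.Ioc 0 1) := by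
    intro z hz
    have h := aux_expand y x z m n hm hz.1.ne'
    simp only
    rw [show x^n * ((1-z)*y + z*x)^m - x^n*y^m
        = ((1-z)*y + z*x)^m * x^n - y^m * x^n from by ring, h]
    exact Finset.sum_congr rfl fun l hl => by ring
  have int1 : IntegrableOn
      (fun z : ℝ => ∑ k ∈ Finset.Icc 1 n, (n.choose k : ℝ) * (z^(k-1) * (1-z)^(n-k))
          * (x^(n-k) * y^(m+k) - x^n * y^m)) (Set.Ioc 0 1) Λ :=
    integrable_finset_sum _ (fun k _ => aux_int' Λ (k-1) (n-k) _ _)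
  have int2 : IntegrableOn
      (fun z : ℝ => ∑ l ∈ Finset.Icc 1 m, (m.choose l : ℝ) * (z^(l-1) * (1-z)^(m-l))
          * (x^(n+l) * y^(m-l) - x^n * y^m)) (Set.Ioc 0 1) Λbar :=
    integrable_finset_sum _ (fun l _ => aux_int' Λbar (l-1) (m-l) _ _)
  refine ⟨int1.congr_fun hg1.symm measurableSet_Ioc,
    int2.congr_fun hg2.symm measurableSet_Ioc, ?_⟩
  -- compute the two integrals
  have hI1 : (∫ z in Set.Ioc (0:ℝ) 1,
        (((1 - z) * x + z * y) ^ n * y ^ m - x ^ n * y ^ m) / z ∂Λ)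
      = ∑ k ∈ Finset.Icc 1 n, (n.choose k : ℝ)
          * (∫ z in Set.Ioc (0:ℝ) 1, z^(k-1) * (1-z)^(n-k) ∂Λ)
          * (x^(n-k) * y^(m+k) - x^n * y^m) := by
    rw [setIntegral_congr_fun measurableSet_Ioc hg1,
      integral_finset_sum _ (fun k _ => aux_int' Λ (k-1) (n-k) _ _)]
    exact Finset.sum_congr rfl fun k _ => by rw [integral_mul_const, integral_const_mul]
  have hI2 : (∫ z in Set.Ioc (0:ℝ) 1,
        (x ^ n * ((1 - z) * y + z * x) ^ m - x ^ n * y ^ m) / z ∂Λbar)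
      = ∑ l ∈ Finset.Icc 1 m, (m.choose l : ℝ)
          * (∫ z in Set.Ioc (0:ℝ) 1, z^(l-1) * (1-z)^(m-l) ∂Λbar)
          * (x^(n+l) * y^(m-l) - x^n * y^m) := by
    rw [setIntegral_congr_fun measurableSet_Ioc hg2,
      integral_finset_sum _ (fun l _ => aux_int' Λbar (l-1) (m-l) _ _)]
    exact Finset.sum_congr rfl fun l _ => by rw [integral_mul_const, integral_const_mul]
  rw [hI1, hI2]
  -- split off the k = 1 (resp. l = 1) terms
  have hsplit : ∀ (N : ℕ), 1 ≤ N → ∀ f : ℕ → ℝ,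
      ∑ k ∈ Finset.Icc 1 N, f k = f 1 + ∑ k ∈ Finset.Icc 2 N, f k := by
    intro N hN f
    have h : Finset.Icc 1 N = insert 1 (Finset.Icc 2 N) := by
      ext j
      simp only [Finset.mem_Icc, Finset.mem_insert]
      omega
    rw [h, Finset.sum_insert (by simp)]
  rw [hsplit n hn, hsplit m hm]
  -- simplify the k = 1 terms
  have e1int : (∫ z in Set.Ioc (0:ℝ) 1, z^(1-1) * (1-z)^(n-1) ∂Λ)
      = ∫ z in Set.Ioc (0:ℝ) 1, (1-z)^(n-1) ∂Λ := by
    refine setIntegral_congr_fun measurableSet_Ioc fun z _ => ?_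
    norm_num
  have e2int : (∫ z in Set.Ioc (0:ℝ) 1, z^(1-1) * (1-z)^(m-1) ∂Λbar)
      = ∫ z in Set.Ioc (0:ℝ) 1, (1-z)^(m-1) ∂Λbar := by
    refine setIntegral_congr_fun measurableSet_Ioc fun z _ => ?_
    norm_num
  rw [e1int, e2int, Nat.choose_one_right, Nat.choose_one_right]
  -- drift terms
  have hxn : x ^ n = x ^ (n-1) * x := by
    rw [← pow_succ, Nat.sub_add_cancel hn]
  have hym : y ^ m = y ^ (m-1) * y := by
    rw [← pow_succ, Nat.sub_add_cancel hm]
  have e1 : c * (y - x) * (n:ℝ) * x ^ (n - 1) * y ^ m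
      = (n:ℝ) * c * (x ^ (n-1) * y ^ (m+1) - x ^ n * y ^ m) := by
    rw [hxn, pow_succ y m]; ring
  have e2 : cbar * K * (x - y) * (m:ℝ) * x ^ n * y ^ (m - 1)
      = (m:ℝ) * (cbar * K) * (x ^ (n+1) * y ^ (m-1) - x ^ n * y ^ m) := by
    rw [pow_succ x n, hym]
    ring
  have e3 : (1 / 2) * x * (1 - x) * (n:ℝ) * ((n : ℝ) - 1) * x ^ (n - 2) * y ^ m
      = (n.choose 2 : ℝ) * (x ^ (n - 1) * y ^ m - x ^ n * y ^ m) := by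
    rcases eq_or_lt_of_le hn with h | h
    · rw [← h]; norm_num
    · have h2 : 2 ≤ n := h
      rw [Nat.cast_choose_two,
        show x ^ (n-1) = x ^ (n-2) * x from by
          rw [← pow_succ, show n - 2 + 1 = n - 1 from by omega],
        show x ^ n = x ^ (n-2) * x * x from by
          rw [← pow_succ, ← pow_succ, show n - 2 + 1 + 1 = n from by omega]]
      ring
  rw [e1, e2, e3]
  push_cast
  ring
end

section
/- Let p ∈ [0,1] and let ρ be a Borel probability measure on [0,1]² such that ∫_{[0,1]²} x^n y^m ρ(d(x,y)) = p for every pair of nonnegative integers (n,m) with n + m ≥ 1. Then ρ = p·δ_{(1,1)} + (1−p)·δ_{(0,0)}, where δ_{(a,b)} denotes the Dirac measure at (a,b). -/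
open MeasureTheory Set

/-- If all mixed moments (of order `n + m ≥ 1`) of a Borel probability measure `ρ` on `[0,1]²`
equal the same value `p`, then `ρ = p δ_{(1,1)} + (1-p) δ_{(0,0)}`. -/
theorem stmt2 (p : ℝ) (hp : p ∈ Set.Icc (0:ℝ) 1)
    (ρ : Measure (ℝ × ℝ)) [IsProbabilityMeasure ρ]
    (hsupp : ρ {q : ℝ × ℝ | ¬ (q.1 ∈ Set.Icc (0:ℝ) 1 ∧ q.2 ∈ Set.Icc (0:ℝ) 1)} = 0)
    (hmom : ∀ n m : ℕ, 1 ≤ n + m → ∫ q : ℝ × ℝ, q.1 ^ n * q.2 ^ m ∂ρ = p) :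
    ρ = ENNReal.ofReal p • Measure.dirac ((1:ℝ), (1:ℝ))
        + ENNReal.ofReal (1 - p) • Measure.dirac ((0:ℝ), (0:ℝ)) := by
  have hbox : ∀ᵐ q ∂ρ, q.1 ∈ Icc (0:ℝ) 1 ∧ q.2 ∈ Icc (0:ℝ) 1 := by
    rw [ae_iff]; exact hsupp
  -- integrability of all monomials
  have hint : ∀ n m : ℕ, Integrable (fun q : ℝ × ℝ => q.1 ^ n * q.2 ^ m) ρ := by
    intro n m
    refine (integrable_const (1:ℝ)).mono' ?_ ?_
    · exact ((measurable_fst.pow_const n).mul (measurable_snd.pow_const m)).aestronglyMeasurable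
    · filter_upwards [hbox] with q hq
      rw [Real.norm_eq_abs, abs_mul, abs_pow, abs_pow]
      have hx : |q.1| ≤ 1 := abs_le.2 ⟨by linarith [hq.1.1], hq.1.2⟩
      have hy : |q.2| ≤ 1 := abs_le.2 ⟨by linarith [hq.2.1], hq.2.2⟩
      have h1 : |q.1| ^ n ≤ 1 := pow_le_one₀ (abs_nonneg _) hx
      have h2 : |q.2| ^ m ≤ 1 := pow_le_one₀ (abs_nonneg _) hy
      nlinarith [pow_nonneg (abs_nonneg q.1) n, pow_nonneg (abs_nonneg q.2) m]
  -- key: if one monomial dominates another a.e., they are a.e. equal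
  have key : ∀ n1 m1 n2 m2 : ℕ, 1 ≤ n1 + m1 → 1 ≤ n2 + m2 →
      (∀ᵐ q ∂ρ, q.1 ^ n1 * q.2 ^ m1 ≤ q.1 ^ n2 * q.2 ^ m2) →
      (∀ᵐ q ∂ρ, q.1 ^ n2 * q.2 ^ m2 = q.1 ^ n1 * q.2 ^ m1) := by
    intro n1 m1 n2 m2 h1 h2 hle
    have hintsub : Integrable
        (fun q : ℝ × ℝ => q.1 ^ n2 * q.2 ^ m2 - q.1 ^ n1 * q.2 ^ m1) ρ :=
      (hint n2 m2).sub (hint n1 m1)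
    have hz : ∫ q : ℝ × ℝ, (q.1 ^ n2 * q.2 ^ m2 - q.1 ^ n1 * q.2 ^ m1) ∂ρ = 0 := by
      rw [integral_sub (hint n2 m2) (hint n1 m1), hmom n2 m2 h2, hmom n1 m1 h1, sub_self]
    have hnn : 0 ≤ᵐ[ρ] fun q : ℝ × ℝ => q.1 ^ n2 * q.2 ^ m2 - q.1 ^ n1 * q.2 ^ m1 := by
      filter_upwards [hle] with q hq; simpa using hq
    have := (integral_eq_zero_iff_of_nonneg_ae hnn hintsub).1 hz
    filter_upwards [this] with q hq
    have : q.1 ^ n2 * q.2 ^ m2 - q.1 ^ n1 * q.2 ^ m1 = 0 := hq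
    linarith
  -- x² = x a.e.
  have hx2 : ∀ᵐ q ∂ρ, q.1 = 0 ∨ q.1 = 1 := by
    have h := key 2 0 1 0 (by norm_num) (by norm_num) ?_
    · filter_upwards [h] with q hq
      simp only [pow_zero, mul_one] at hq
      have : q.1 * (q.1 - 1) = 0 := by ring_nf; nlinarith [hq]
      rcases mul_eq_zero.1 this with h | h
      · exact Or.inl h
      · exact Or.inr (by linarith)
    · filter_upwards [hbox] with q hq
      simp only [pow_zero, mul_one]
      nlinarith [hq.1.1, hq.1.2]
  have hy2 : ∀ᵐ q ∂ρ, q.2 = 0 ∨ q.2 = 1 := by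
    have h := key 0 2 0 1 (by norm_num) (by norm_num) ?_
    · filter_upwards [h] with q hq
      simp only [pow_zero, one_mul] at hq
      have : q.2 * (q.2 - 1) = 0 := by nlinarith [hq]
      rcases mul_eq_zero.1 this with h | h
      · exact Or.inl h
      · exact Or.inr (by linarith)
    · filter_upwards [hbox] with q hq
      simp only [pow_zero, one_mul]
      nlinarith [hq.2.1, hq.2.2]
  have hxy : ∀ᵐ q ∂ρ, q.1 * q.2 = q.1 := by
    have h := key 1 1 1 0 (by norm_num) (by norm_num) ?_
    · filter_upwards [h] with q hq; simpa using hq.symm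
    · filter_upwards [hbox] with q hq
      simp only [pow_one, pow_zero, mul_one]
      nlinarith [hq.1.1, hq.2.1, hq.2.2]
  have hyx : ∀ᵐ q ∂ρ, q.1 * q.2 = q.2 := by
    have h := key 1 1 0 1 (by norm_num) (by norm_num) ?_
    · filter_upwards [h] with q hq; simpa using hq.symm
    · filter_upwards [hbox] with q hq
      simp only [pow_one, pow_zero, one_mul]
      nlinarith [hq.2.1, hq.1.1, hq.1.2]
  -- a.e. q is (0,0) or (1,1)
  have hT : ∀ᵐ q ∂ρ, q = ((0:ℝ), (0:ℝ)) ∨ q = ((1:ℝ), (1:ℝ)) := by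
    filter_upwards [hx2, hy2, hxy, hyx] with q h1 h2 h3 h4
    rcases h1 with hx | hx
    · left
      have : q.2 = 0 := by rw [hx] at h4; simpa using h4.symm
      exact Prod.ext hx this
    · right
      have : q.2 = 1 := by rw [hx] at h3; simpa using h3
      exact Prod.ext hx this
  -- ρ {(1,1)} = ofReal p
  have h11m : MeasurableSet ({((1:ℝ),(1:ℝ))} : Set (ℝ × ℝ)) := measurableSet_singleton _
  have h00m : MeasurableSet ({((0:ℝ),(0:ℝ))} : Set (ℝ × ℝ)) := measurableSet_singleton _
  have hρ11 : ρ {((1:ℝ),(1:ℝ))} = ENNReal.ofReal p := by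
    have h1 : ∫ q : ℝ × ℝ, q.1 ^ 1 * q.2 ^ 0 ∂ρ = p := hmom 1 0 (by norm_num)
    have h2 : ∫ q : ℝ × ℝ, q.1 ^ 1 * q.2 ^ 0 ∂ρ
        = ∫ q : ℝ × ℝ, Set.indicator {((1:ℝ),(1:ℝ))} (fun _ => (1:ℝ)) q ∂ρ := by
      refine integral_congr_ae ?_
      filter_upwards [hT] with q hq
      rcases hq with h | h <;> subst h <;> simp
    rw [h2, integral_indicator_const _ h11m] at h1
    simp only [smul_eq_mul, mul_one] at h1
    rw [← h1, measureReal_def, ENNReal.ofReal_toReal (measure_ne_top ρ _)]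
  have hρ00 : ρ {((0:ℝ),(0:ℝ))} = ENNReal.ofReal (1 - p) := by
    have hdisj : Disjoint ({((0:ℝ),(0:ℝ))} : Set (ℝ × ℝ)) {((1:ℝ),(1:ℝ))} := by
      simp [Set.disjoint_singleton]
    have hTfull : ρ ({((0:ℝ),(0:ℝ))} ∪ {((1:ℝ),(1:ℝ))} : Set (ℝ × ℝ)) = 1 := by
      have hcompl : ρ (({((0:ℝ),(0:ℝ))} ∪ {((1:ℝ),(1:ℝ))} : Set (ℝ × ℝ))ᶜ) = 0 := by
        refine measure_mono_null ?_ (ae_iff.1 hT)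
        intro q hq h
        exact hq (h.elim (fun h => Or.inl h) (fun h => Or.inr h))
      have h := measure_add_measure_compl (μ := ρ) (h00m.union h11m)
      rw [hcompl, add_zero, measure_univ] at h
      exact h
    rw [measure_union hdisj h11m, hρ11] at hTfull
    have : ρ {((0:ℝ),(0:ℝ))} = 1 - ENNReal.ofReal p := by
      rw [← hTfull, ENNReal.add_sub_cancel_right (by simp)]
    rw [this, ← ENNReal.ofReal_one, ← ENNReal.ofReal_sub _ hp.1]
  -- conclude by extensionality
  ext s hs
  have hsplit : ρ s = ρ (s ∩ {((1:ℝ),(1:ℝ))}) + ρ (s ∩ {((0:ℝ),(0:ℝ))}) := by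
    have hnull : ρ (s \ ({((1:ℝ),(1:ℝ))} ∪ {((0:ℝ),(0:ℝ))})) = 0 := by
      refine measure_mono_null ?_ (ae_iff.1 hT)
      intro q hq h
      exact hq.2 (h.elim (fun h => Or.inr h) (fun h => Or.inl h))
    have hsub : s ⊆ (s ∩ {((1:ℝ),(1:ℝ))}) ∪ (s ∩ {((0:ℝ),(0:ℝ))})
        ∪ (s \ ({((1:ℝ),(1:ℝ))} ∪ {((0:ℝ),(0:ℝ))})) := by
      intro q hq
      by_cases h1 : q = ((1:ℝ),(1:ℝ))
      · exact Or.inl (Or.inl ⟨hq, h1⟩)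
      by_cases h0 : q = ((0:ℝ),(0:ℝ))
      · exact Or.inl (Or.inr ⟨hq, h0⟩)
      · exact Or.inr ⟨hq, fun h => h.elim h1 h0⟩
    have hle1 : ρ s ≤ ρ (s ∩ {((1:ℝ),(1:ℝ))}) + ρ (s ∩ {((0:ℝ),(0:ℝ))}) := by
      calc ρ s ≤ ρ ((s ∩ {((1:ℝ),(1:ℝ))}) ∪ (s ∩ {((0:ℝ),(0:ℝ))})
          ∪ (s \ ({((1:ℝ),(1:ℝ))} ∪ {((0:ℝ),(0:ℝ))}))) := measure_mono hsub
        _ ≤ ρ ((s ∩ {((1:ℝ),(1:ℝ))}) ∪ (s ∩ {((0:ℝ),(0:ℝ))}))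
            + ρ (s \ ({((1:ℝ),(1:ℝ))} ∪ {((0:ℝ),(0:ℝ))})) := measure_union_le _ _
        _ = ρ ((s ∩ {((1:ℝ),(1:ℝ))}) ∪ (s ∩ {((0:ℝ),(0:ℝ))})) := by rw [hnull, add_zero]
        _ ≤ ρ (s ∩ {((1:ℝ),(1:ℝ))}) + ρ (s ∩ {((0:ℝ),(0:ℝ))}) := measure_union_le _ _
    have hle2 : ρ (s ∩ {((1:ℝ),(1:ℝ))}) + ρ (s ∩ {((0:ℝ),(0:ℝ))}) ≤ ρ s := by
      have hd : Disjoint (s ∩ {((1:ℝ),(1:ℝ))}) (s ∩ {((0:ℝ),(0:ℝ))}) := by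
        refine Set.disjoint_left.2 ?_
        rintro q ⟨_, hq1⟩ ⟨_, hq0⟩
        rw [Set.mem_singleton_iff] at hq1 hq0
        rw [hq1] at hq0
        exact absurd (congrArg Prod.fst hq0) (by norm_num)
      rw [← measure_union hd (hs.inter h00m)]
      exact measure_mono (fun q hq => hq.elim (fun h => h.1) (fun h => h.1))
    exact le_antisymm hle1 hle2
  rw [hsplit]
  simp only [Measure.add_apply, Measure.smul_apply, smul_eq_mul,
    Measure.dirac_apply' _ hs]
  by_cases h1 : ((1:ℝ),(1:ℝ)) ∈ s <;> by_cases h0 : ((0:ℝ),(0:ℝ)) ∈ s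
  · rw [Set.inter_eq_self_of_subset_right (by simpa using h1),
      Set.inter_eq_self_of_subset_right (by simpa using h0), hρ11, hρ00,
      Set.indicator_of_mem h1, Set.indicator_of_mem h0]
    simp
  · rw [Set.inter_eq_self_of_subset_right (by simpa using h1),
      Set.inter_singleton_eq_empty.2 h0, hρ11,
      Set.indicator_of_mem h1, Set.indicator_of_notMem h0]
    simp
  · rw [Set.inter_singleton_eq_empty.2 h1,
      Set.inter_eq_self_of_subset_right (by simpa using h0), hρ00,
      Set.indicator_of_notMem h1, Set.indicator_of_mem h0]
    simp
  · rw [Set.inter_singleton_eq_empty.2 h1, Set.inter_singleton_eq_empty.2 h0,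
      Set.indicator_of_notMem h1, Set.indicator_of_notMem h0]
    simp
end

section
/- Let Λ be a finite Borel measure on [0,1] with Λ({0}) = 0, and for integers n ≥ 2 set γ(n) := ∫_{(0,1]} (1 − (1−z)^n) z^{−1} Λ(dz). Then for every n ≥ 2, | γ(n)/(C(n,2) + γ(n)) − γ(n)/C(n,2) | ≤ 4 Λ([0,1])² / (n−1)², where C(n,2) = n(n−1)/2. -/
open MeasureTheory Set

/-- The probability that a migration precedes the next coalescence,
`γ(n)/(C(n,2)+γ(n))`, equals `γ(n)/C(n,2)` up to an error of `4Λ([0,1])²/(n−1)²`. -/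
theorem stmt4 (Λ : Measure ℝ) [IsFiniteMeasure Λ]
    (hΛsupp : Λ (Set.Icc (0:ℝ) 1)ᶜ = 0) (hΛ0 : Λ {0} = 0)
    (n : ℕ) (hn : 2 ≤ n)
    (γ : ℝ) (hγ : γ = ∫ z in Set.Ioc (0:ℝ) 1, (1 - (1 - z) ^ n) / z ∂Λ) :
    |γ / ((n.choose 2 : ℝ) + γ) - γ / (n.choose 2 : ℝ)|
      ≤ 4 * (Λ (Set.Icc (0:ℝ) 1)).toReal ^ 2 / ((n : ℝ) - 1) ^ 2 := by
  set C : ℝ := (n.choose 2 : ℝ) with hCdef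
  set L : ℝ := (Λ (Set.Icc (0:ℝ) 1)).toReal with hLdef
  have hL0 : 0 ≤ L := ENNReal.toReal_nonneg
  have hn2 : (2:ℝ) ≤ (n:ℝ) := by exact_mod_cast hn
  have hn1 : (1:ℝ) ≤ (n:ℝ) - 1 := by linarith
  have hC : C = (n:ℝ) * ((n:ℝ) - 1) / 2 := by
    rw [hCdef, Nat.cast_choose_two]
  have hCpos : 0 < C := by rw [hC]; nlinarith
  -- γ is nonnegative
  have hγ0 : 0 ≤ γ := by
    rw [hγ]
    apply setIntegral_nonneg measurableSet_Ioc
    intro z hz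
    have h1 : (1 - z) ^ n ≤ 1 :=
      pow_le_one₀ (by linarith [hz.2]) (by linarith [hz.1.le])
    exact div_nonneg (by linarith) hz.1.le
  -- pointwise bound and hence γ ≤ n * L
  have hγle : γ ≤ (n:ℝ) * L := by
    have hb : ‖γ‖ ≤ (n:ℝ) * (Λ (Set.Ioc (0:ℝ) 1)).toReal := by
      rw [hγ]
      apply norm_setIntegral_le_of_norm_le_const (measure_lt_top Λ _) ?_
      intro z hz
      have hzpos : 0 < z := hz.1
      have hbern : (1:ℝ) - (n:ℝ) * z ≤ (1 - z) ^ n := by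
        have h := one_add_mul_le_pow (show (-2:ℝ) ≤ -z by linarith [hz.2]) n
        rw [show (1:ℝ) + -z = 1 - z from by ring] at h
        linarith
      have h2 : 1 - (1 - z) ^ n ≤ (n:ℝ) * z := by linarith
      have h1 : (1 - z) ^ n ≤ 1 :=
        pow_le_one₀ (by linarith [hz.2]) (by linarith [hzpos.le])
      have hnn : 0 ≤ (1 - (1 - z) ^ n) / z := div_nonneg (by linarith) hzpos.le
      simp only [id_eq, Real.norm_eq_abs]
      rw [abs_of_nonneg hnn, div_le_iff₀ hzpos]
      exact h2
    have hmono : (Λ (Set.Ioc (0:ℝ) 1)).toReal ≤ L := by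
      rw [hLdef]
      exact ENNReal.toReal_mono (measure_ne_top Λ _)
        (measure_mono Ioc_subset_Icc_self)
    calc γ ≤ ‖γ‖ := le_abs_self γ
    _ ≤ (n:ℝ) * (Λ (Set.Ioc (0:ℝ) 1)).toReal := hb
    _ ≤ (n:ℝ) * L := by nlinarith
  -- algebra
  have hCγ : 0 < C + γ := by linarith
  have key : γ / (C + γ) - γ / C = -(γ ^ 2 / (C * (C + γ))) := by
    field_simp
    ring
  rw [key, abs_neg, abs_of_nonneg (by positivity)]
  have h1 : γ ^ 2 / (C * (C + γ)) ≤ γ ^ 2 / (C * C) := by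
    apply div_le_div_of_nonneg_left (by positivity) (by positivity)
    nlinarith
  have h2 : γ ^ 2 / (C * C) ≤ 4 * L ^ 2 / ((n:ℝ) - 1) ^ 2 := by
    rw [div_le_div_iff₀ (by positivity) (by positivity), hC]
    have hsq : γ * γ ≤ ((n:ℝ) * L) * ((n:ℝ) * L) :=
      mul_le_mul hγle hγle hγ0 (by positivity)
    nlinarith [mul_le_mul_of_nonneg_right hsq (sq_nonneg ((n:ℝ) - 1))]
  linarith
end

section
/- Let Λ be a finite Borel measure on [0,1] with Λ({0}) = 0, and for integers n ≥ 2 define γ(n) := ∫_{(0,1]} (1 − (1−z)^n) z^{−1} Λ(dz). Then ∑_{n=2}^{∞} γ(n)/(C(n,2) + γ(n)) < ∞ if and only if ∫_{(0,1]} (−log z) Λ(dz) < ∞, where C(n,2) = n(n−1)/2. -/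
open MeasureTheory Set


lemma stmt7aux_geom {z : ℝ} (hz : 0 < z) (m : ℕ) :
    (1 - (1 - z) ^ m) / z = ∑ k ∈ Finset.range m, (1 - z) ^ k := by
  have hz' : z ≠ 0 := hz.ne'
  rw [geom_sum_eq (by intro h; nlinarith [h] : (1:ℝ) - z ≠ 1)]
  rw [show (1:ℝ) - z - 1 = -z from by ring, div_neg, ← neg_div, neg_sub]

lemma stmt7aux_nonneg {z : ℝ} (hz : z ∈ Set.Ioc (0:ℝ) 1) (m : ℕ) :
    0 ≤ (1 - (1 - z) ^ m) / z := by
  rw [stmt7aux_geom hz.1]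
  exact Finset.sum_nonneg fun k _ => pow_nonneg (by linarith [hz.2]) k

lemma stmt7aux_le {z : ℝ} (hz : z ∈ Set.Ioc (0:ℝ) 1) (m : ℕ) :
    (1 - (1 - z) ^ m) / z ≤ m := by
  rw [stmt7aux_geom hz.1]
  calc ∑ k ∈ Finset.range m, (1 - z) ^ k ≤ ∑ k ∈ Finset.range m, 1 := by
        apply Finset.sum_le_sum
        intro k _
        exact pow_le_one₀ (by linarith [hz.2]) (by linarith [hz.1])
    _ = m := by simp

lemma stmt7aux_ge {z : ℝ} (hz : z ∈ Set.Ioc (0:ℝ) 1) {m : ℕ} (hm : (m:ℝ) * z ≤ 1) :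
    (m:ℝ) / 2 ≤ (1 - (1 - z) ^ m) / z := by
  obtain ⟨hz0, hz1⟩ := hz
  have hb : 1 + (m:ℝ) * z ≤ (1 + z) ^ m := by
    have := one_add_mul_le_pow (a := z) (by linarith) m
    linarith [this]
  have h2 : (1 - z) ^ m * (1 + z) ^ m ≤ 1 := by
    rw [← mul_pow]
    have h1 : (1 - z) * (1 + z) ≤ 1 := by nlinarith
    calc ((1 - z) * (1 + z)) ^ m ≤ 1 ^ m := pow_le_pow_left₀ (by nlinarith) h1 m
      _ = 1 := one_pow m
  have hp : (0:ℝ) < 1 + (m:ℝ) * z := by positivity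
  have h3 : (1 - z) ^ m ≤ 1 / (1 + (m:ℝ) * z) := by
    rw [le_div_iff₀ hp]
    calc (1 - z) ^ m * (1 + (m:ℝ) * z) ≤ (1 - z) ^ m * (1 + z) ^ m := by
          apply mul_le_mul_of_nonneg_left hb (pow_nonneg (by linarith) m)
      _ ≤ 1 := h2
  have heq : 1 - 1 / (1 + (m:ℝ) * z) = (m:ℝ) * z / (1 + (m:ℝ) * z) := by
    field_simp
    ring
  have h5 : (m:ℝ) * z / 2 ≤ 1 - 1 / (1 + (m:ℝ) * z) := by
    rw [heq, div_le_div_iff₀ (by norm_num) hp]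
    have hm0 : (0:ℝ) ≤ (m:ℝ) * z := by positivity
    nlinarith
  rw [le_div_iff₀ hz0]
  nlinarith [h3, h5]

lemma stmt7aux_T (k : ℕ) :
    (∑' n : ℕ, if k < n + 2 then ENNReal.ofReal ((((n:ℝ) + 2) ^ 2)⁻¹) else 0)
      ≤ ENNReal.ofReal (2 / ((k:ℝ) + 1)) := by
  apply Summable.tsum_le_of_sum_le ENNReal.summable
  intro s
  set B := (s.sup id) + 1 with hB
  have hsub : s ⊆ Finset.range B := fun n hn =>
    Finset.mem_range.2 (Nat.lt_succ_of_le (Finset.le_sup (f := id) hn))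
  calc ∑ n ∈ s, (if k < n + 2 then ENNReal.ofReal ((((n:ℝ) + 2) ^ 2)⁻¹) else 0)
      ≤ ∑ n ∈ Finset.range B, (if k < n + 2 then ENNReal.ofReal ((((n:ℝ) + 2) ^ 2)⁻¹) else 0) :=
        Finset.sum_le_sum_of_subset hsub
    _ = ENNReal.ofReal (∑ n ∈ Finset.range B, if k < n + 2 then (((n:ℝ) + 2) ^ 2)⁻¹ else 0) := by
        rw [ENNReal.ofReal_sum_of_nonneg]
        · exact Finset.sum_congr rfl fun n _ => by split_ifs <;> simp
        · intro n _; split_ifs <;> positivity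
    _ ≤ ENNReal.ofReal (2 / ((k:ℝ) + 1)) := by
        apply ENNReal.ofReal_le_ofReal
        rw [← Finset.sum_filter]
        have hmap : ∀ n : ℕ, (((n:ℝ) + 2) ^ 2)⁻¹ = (((n + 2 : ℕ) : ℝ) ^ 2)⁻¹ := by
          intro n; push_cast; ring_nf
        calc ∑ n ∈ (Finset.range B).filter (fun n => k < n + 2), (((n:ℝ) + 2) ^ 2)⁻¹
            = ∑ i ∈ ((Finset.range B).filter (fun n => k < n + 2)).map
                ⟨fun n => n + 2, add_left_injective 2⟩, ((i:ℝ) ^ 2)⁻¹ := by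
              rw [Finset.sum_map]
              exact Finset.sum_congr rfl fun n _ => hmap n
          _ ≤ ∑ i ∈ Finset.Ioo k (B + 2), ((i:ℝ) ^ 2)⁻¹ := by
              apply Finset.sum_le_sum_of_subset_of_nonneg
              · intro i hi
                simp only [Finset.mem_map, Finset.mem_filter, Finset.mem_range,
                  Function.Embedding.coeFn_mk] at hi
                obtain ⟨n, ⟨hnB, hkn⟩, rfl⟩ := hi
                exact Finset.mem_Ioo.2 ⟨hkn, by omega⟩
              · intro i _ _; positivity
          _ ≤ 2 / ((k:ℝ) + 1) := by
              have := sum_Ioo_inv_sq_le (α := ℝ) k (B + 2)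
              exact_mod_cast this

lemma stmt7aux_upper {z : ℝ} (hz : z ∈ Set.Ioc (0:ℝ) 1) :
    (∑' n : ℕ, ENNReal.ofReal ((1 - (1 - z) ^ (n + 2)) / z)
        * ENNReal.ofReal ((((n:ℝ) + 2) ^ 2)⁻¹))
      ≤ 2 * ENNReal.ofReal (-Real.log z) + 2 := by
  obtain ⟨hz0, hz1⟩ := hz
  set w : ℝ := 1 - z with hw
  have hw0 : 0 ≤ w := by simp [hw]; linarith
  have hw1 : w < 1 := by simp [hw]; linarith
  set W : ENNReal := ENNReal.ofReal w with hW
  have hterm : ∀ n : ℕ, ENNReal.ofReal ((1 - (1 - z) ^ (n + 2)) / z)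
      = ∑ k ∈ Finset.range (n + 2), W ^ k := by
    intro n
    rw [stmt7aux_geom hz0, ENNReal.ofReal_sum_of_nonneg (fun k _ => pow_nonneg hw0 k)]
    exact Finset.sum_congr rfl fun k _ => ENNReal.ofReal_pow hw0 k
  calc (∑' n : ℕ, ENNReal.ofReal ((1 - (1 - z) ^ (n + 2)) / z)
        * ENNReal.ofReal ((((n:ℝ) + 2) ^ 2)⁻¹))
      = ∑' n : ℕ, ∑ k ∈ Finset.range (n + 2),
          W ^ k * ENNReal.ofReal ((((n:ℝ) + 2) ^ 2)⁻¹) := by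
        refine tsum_congr fun n => ?_
        rw [hterm, Finset.sum_mul]
    _ = ∑' n : ℕ, ∑' k : ℕ,
          (if k < n + 2 then W ^ k * ENNReal.ofReal ((((n:ℝ) + 2) ^ 2)⁻¹) else 0) := by
        refine tsum_congr fun n => ?_
        rw [tsum_eq_sum (s := Finset.range (n + 2)) (fun k hk => if_neg (by simpa using hk))]
        exact Finset.sum_congr rfl fun k hk => (if_pos (Finset.mem_range.1 hk)).symm
    _ = ∑' k : ℕ, ∑' n : ℕ,
          (if k < n + 2 then W ^ k * ENNReal.ofReal ((((n:ℝ) + 2) ^ 2)⁻¹) else 0) :=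
        ENNReal.tsum_comm
    _ = ∑' k : ℕ, W ^ k * ∑' n : ℕ,
          (if k < n + 2 then ENNReal.ofReal ((((n:ℝ) + 2) ^ 2)⁻¹) else 0) := by
        refine tsum_congr fun k => ?_
        rw [← ENNReal.tsum_mul_left]
        exact tsum_congr fun n => by split_ifs <;> simp
    _ ≤ ∑' k : ℕ, W ^ k * ENNReal.ofReal (2 / ((k:ℝ) + 1)) :=
        ENNReal.tsum_le_tsum fun k => mul_le_mul_right (stmt7aux_T k) _
    _ = ∑' k : ℕ, ENNReal.ofReal (w ^ k * (2 / ((k:ℝ) + 1))) := by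
        refine tsum_congr fun k => ?_
        rw [ENNReal.ofReal_mul (pow_nonneg hw0 k), ENNReal.ofReal_pow hw0]
    _ = ENNReal.ofReal (w ^ 0 * (2 / ((0:ℝ) + 1))) + ∑' k : ℕ,
          ENNReal.ofReal (w ^ (k + 1) * (2 / (((k:ℝ) + 1) + 1))) := by
        rw [tsum_eq_zero_add' ENNReal.summable]
        congr 1
        · norm_num
        · exact tsum_congr fun k => by push_cast; ring_nf
    _ ≤ 2 + ∑' k : ℕ, ENNReal.ofReal (2 * (w ^ (k + 1) / ((k:ℝ) + 1))) := by
        refine add_le_add ?_ (ENNReal.tsum_le_tsum fun k => ENNReal.ofReal_le_ofReal ?_)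
        · simp
        · have hpow : (0:ℝ) ≤ w ^ (k + 1) := pow_nonneg hw0 _
          have h2 : 2 / (((k:ℝ) + 1) + 1) ≤ 2 / ((k:ℝ) + 1) := by
            gcongr
            linarith
          calc w ^ (k + 1) * (2 / (((k:ℝ) + 1) + 1))
              ≤ w ^ (k + 1) * (2 / ((k:ℝ) + 1)) := mul_le_mul_of_nonneg_left h2 hpow
            _ = 2 * (w ^ (k + 1) / ((k:ℝ) + 1)) := by ring
    _ ≤ 2 * ENNReal.ofReal (-Real.log z) + 2 := by
        have habs : |w| < 1 := by rwa [abs_of_nonneg hw0]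
        have hlog : HasSum (fun k : ℕ => 2 * (w ^ (k + 1) / ((k:ℝ) + 1)))
            (2 * -Real.log (1 - w)) :=
          (Real.hasSum_pow_div_log_of_abs_lt_one habs).mul_left 2
        have hnn : ∀ k : ℕ, 0 ≤ 2 * (w ^ (k + 1) / ((k:ℝ) + 1)) := fun k => by positivity
        have h1z : (1:ℝ) - w = z := by simp [hw]
        have htail : (∑' k : ℕ, ENNReal.ofReal (2 * (w ^ (k + 1) / ((k:ℝ) + 1))))
            = 2 * ENNReal.ofReal (-Real.log z) := by
          rw [← ENNReal.ofReal_tsum_of_nonneg hnn hlog.summable, hlog.tsum_eq, h1z,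
            ENNReal.ofReal_mul (by norm_num), ENNReal.ofReal_ofNat]
        rw [htail]
        exact le_of_eq (add_comm _ _)

lemma stmt7aux_lower {z : ℝ} (hz : z ∈ Set.Ioc (0:ℝ) 1) :
    ENNReal.ofReal (-Real.log z)
      ≤ 2 * (∑' n : ℕ, ENNReal.ofReal ((1 - (1 - z) ^ (n + 2)) / z)
          * ENNReal.ofReal ((((n:ℝ) + 2) ^ 2)⁻¹)) + 1 := by
  obtain ⟨hz0, hz1⟩ := hz
  have hz1' : (1:ℝ) ≤ z⁻¹ := (one_le_inv₀ hz0).mpr hz1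
  set N := ⌊z⁻¹⌋₊ with hN
  have hN1 : 1 ≤ N := Nat.le_floor (by exact_mod_cast hz1')
  have hlt : z⁻¹ < (N:ℝ) + 1 := Nat.lt_floor_add_one z⁻¹
  have hNle : (N:ℝ) ≤ z⁻¹ := Nat.floor_le (by positivity)
  have hlog : -Real.log z ≤ Real.log ((N:ℝ) + 1) := by
    rw [← Real.log_inv]
    exact Real.log_le_log (by positivity) hlt.le
  have hlog2 : Real.log ((N:ℝ) + 1) ≤ (harmonic N : ℝ) := by
    have := log_add_one_le_harmonic N
    push_cast at this ⊢
    linarith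
  have hharm : (harmonic N : ℝ) = 1 + ∑ i ∈ Finset.range (N - 1), ((i:ℝ) + 2)⁻¹ := by
    have h1 : (harmonic N : ℝ) = ∑ i ∈ Finset.range N, ((i:ℝ) + 1)⁻¹ := by
      rw [harmonic]
      push_cast
      rfl
    have h2 : N = (N - 1) + 1 := by omega
    rw [h1, h2, Finset.sum_range_succ']
    push_cast
    ring_nf
  have key : ∀ i ∈ Finset.range (N - 1), ENNReal.ofReal (((i:ℝ) + 2)⁻¹)
      ≤ 2 * (ENNReal.ofReal ((1 - (1 - z) ^ (i + 2)) / z)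
          * ENNReal.ofReal ((((i:ℝ) + 2) ^ 2)⁻¹)) := by
    intro i hi
    have hiN : i + 2 ≤ N := by
      have := Finset.mem_range.1 hi; omega
    have hmz : ((i + 2 : ℕ):ℝ) * z ≤ 1 := by
      have h1 : ((i + 2 : ℕ):ℝ) ≤ z⁻¹ := le_trans (by exact_mod_cast hiN) hNle
      calc ((i + 2 : ℕ):ℝ) * z ≤ z⁻¹ * z := by
            apply mul_le_mul_of_nonneg_right h1 hz0.le
        _ = 1 := inv_mul_cancel₀ hz0.ne'
    have hF : ((i:ℝ) + 2) / 2 ≤ (1 - (1 - z) ^ (i + 2)) / z := by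
      have := stmt7aux_ge ⟨hz0, hz1⟩ hmz
      push_cast at this
      linarith
    have hpos : (0:ℝ) < (i:ℝ) + 2 := by positivity
    calc ENNReal.ofReal (((i:ℝ) + 2)⁻¹)
        = 2 * (ENNReal.ofReal (((i:ℝ) + 2) / 2) * ENNReal.ofReal ((((i:ℝ) + 2) ^ 2)⁻¹)) := by
          rw [← ENNReal.ofReal_mul (by positivity), ← ENNReal.ofReal_ofNat 2,
            ← ENNReal.ofReal_mul (by positivity)]
          congr 1
          field_simp
      _ ≤ 2 * (ENNReal.ofReal ((1 - (1 - z) ^ (i + 2)) / z)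
            * ENNReal.ofReal ((((i:ℝ) + 2) ^ 2)⁻¹)) := by
          exact mul_le_mul_right (mul_le_mul_left (ENNReal.ofReal_le_ofReal hF) _) 2
  calc ENNReal.ofReal (-Real.log z)
      ≤ ENNReal.ofReal (1 + ∑ i ∈ Finset.range (N - 1), ((i:ℝ) + 2)⁻¹) := by
        apply ENNReal.ofReal_le_ofReal
        linarith [hharm ▸ hlog2]
    _ ≤ 1 + ∑ i ∈ Finset.range (N - 1), ENNReal.ofReal (((i:ℝ) + 2)⁻¹) := by
        rw [ENNReal.ofReal_add (by norm_num)
          (Finset.sum_nonneg fun i _ => by positivity),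
          ENNReal.ofReal_sum_of_nonneg fun i _ => by positivity]
        simp
    _ ≤ 1 + ∑ i ∈ Finset.range (N - 1),
          2 * (ENNReal.ofReal ((1 - (1 - z) ^ (i + 2)) / z)
            * ENNReal.ofReal ((((i:ℝ) + 2) ^ 2)⁻¹)) :=
        add_le_add_right (Finset.sum_le_sum key) 1
    _ = 2 * (∑ i ∈ Finset.range (N - 1),
          ENNReal.ofReal ((1 - (1 - z) ^ (i + 2)) / z)
            * ENNReal.ofReal ((((i:ℝ) + 2) ^ 2)⁻¹)) + 1 := by
        rw [Finset.mul_sum, add_comm]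
    _ ≤ 2 * (∑' n : ℕ, ENNReal.ofReal ((1 - (1 - z) ^ (n + 2)) / z)
          * ENNReal.ofReal ((((n:ℝ) + 2) ^ 2)⁻¹)) + 1 := by
        gcongr
        exact ENNReal.sum_le_tsum _

/-- Coming-down-from-infinity criterion: with `γ(n) = ∫ (1−(1−z)^n) z^{−1} Λ(dz)`,
the series `∑_{n≥2} γ(n)/(C(n,2)+γ(n))` converges iff `∫ (−log z) Λ(dz) < ∞`. -/

theorem stmt7 (Λ : Measure ℝ) [IsFiniteMeasure Λ]
    (hΛsupp : Λ (Set.Icc (0:ℝ) 1)ᶜ = 0) (hΛ0 : Λ {0} = 0)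
    (γ : ℕ → ℝ)
    (hγ : ∀ n : ℕ, γ n = ∫ z in Set.Ioc (0:ℝ) 1, (1 - (1 - z) ^ n) / z ∂Λ) :
    (Summable fun n : ℕ => γ (n + 2) / (((n + 2).choose 2 : ℝ) + γ (n + 2)))
      ↔ (∫⁻ z in Set.Ioc (0:ℝ) 1, ENNReal.ofReal (-Real.log z) ∂Λ) < ⊤ := by
  classical
  set ν : Measure ℝ := Λ.restrict (Set.Ioc 0 1) with hν
  set M : ℝ := (Λ (Set.Ioc 0 1)).toReal with hMdef
  have hM0 : 0 ≤ M := ENNReal.toReal_nonneg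
  -- measurability
  have hmeasF : ∀ m : ℕ, Measurable fun z : ℝ => (1 - (1 - z) ^ m) / z := by
    intro m; fun_prop
  set t : ℕ → ℝ → ENNReal := fun n z =>
    ENNReal.ofReal ((1 - (1 - z) ^ (n + 2)) / z)
      * ENNReal.ofReal ((((n:ℝ) + 2) ^ 2)⁻¹) with ht
  have hmeast : ∀ n : ℕ, Measurable (t n) := fun n =>
    ((hmeasF (n + 2)).ennreal_ofReal).mul_const _
  -- integrability
  have hInt : ∀ m : ℕ, Integrable (fun z => (1 - (1 - z) ^ m) / z) ν := by
    intro m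
    refine Integrable.mono' (integrable_const (m:ℝ)) (hmeasF m).aestronglyMeasurable ?_
    refine (ae_restrict_iff' measurableSet_Ioc).2 (ae_of_all _ fun z hz => ?_)
    rw [Real.norm_eq_abs, abs_of_nonneg (stmt7aux_nonneg hz m)]
    exact stmt7aux_le hz m
  have hγnn : ∀ n : ℕ, 0 ≤ γ (n + 2) := fun n => by
    rw [hγ]
    exact setIntegral_nonneg measurableSet_Ioc fun z hz => stmt7aux_nonneg hz _
  have hγle : ∀ n : ℕ, γ n ≤ n * M := by
    intro n
    have hb : ∀ᵐ z ∂ν, ‖(1 - (1 - z) ^ n) / z‖ ≤ (n:ℝ) :=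
      (ae_restrict_iff' measurableSet_Ioc).2 (ae_of_all _ fun z hz => by
        rw [Real.norm_eq_abs, abs_of_nonneg (stmt7aux_nonneg hz n)]
        exact stmt7aux_le hz n)
    have := norm_integral_le_of_norm_le_const (μ := ν) hb
    rw [hγ]
    have huniv : ν Set.univ = Λ (Set.Ioc 0 1) := by
      rw [hν, Measure.restrict_apply_univ]
    calc (∫ z in Set.Ioc (0:ℝ) 1, (1 - (1 - z) ^ n) / z ∂Λ)
        ≤ ‖∫ z in Set.Ioc (0:ℝ) 1, (1 - (1 - z) ^ n) / z ∂Λ‖ := by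
          rw [Real.norm_eq_abs]; exact le_abs_self _
      _ ≤ (n:ℝ) * (ν Set.univ).toReal := this
      _ = n * M := by rw [huniv]
  -- the u sequence
  set u : ℕ → ℝ := fun n => γ (n + 2) * ((((n:ℝ) + 2) ^ 2)⁻¹) with hu
  have hunn : ∀ n, 0 ≤ u n := fun n => mul_nonneg (hγnn n) (by positivity)
  -- Step C : Summable term ↔ Summable u
  have hchoose : ∀ n : ℕ, (((n + 2).choose 2 : ℕ) : ℝ) = ((n:ℝ) + 2) * ((n:ℝ) + 1) / 2 := by
    intro n
    rw [Nat.cast_choose_two]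
    push_cast
    ring
  have stepC : (Summable fun n : ℕ => γ (n + 2) / (((n + 2).choose 2 : ℝ) + γ (n + 2)))
      ↔ Summable u := by
    constructor
    · intro h
      have hcomp : ∀ n : ℕ, u n ≤ (1 / 2 + M)
          * (γ (n + 2) / (((n + 2).choose 2 : ℝ) + γ (n + 2))) := by
        intro n
        have hd1 : (((n + 2).choose 2 : ℕ) : ℝ) + γ (n + 2)
            ≤ ((n:ℝ) + 2) ^ 2 * (1 / 2 + M) := by
          rw [hchoose]
          have h1 : γ (n + 2) ≤ ((n:ℝ) + 2) * M := by
            have := hγle (n + 2); push_cast at this; linarith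
          nlinarith [hγnn n, sq_nonneg ((n:ℝ) + 2)]
        have hdpos : (0:ℝ) < (((n + 2).choose 2 : ℕ) : ℝ) + γ (n + 2) := by
          rw [hchoose]; nlinarith [hγnn n, Nat.cast_nonneg (α := ℝ) n]
        have hsq : (0:ℝ) < ((n:ℝ) + 2) ^ 2 := by positivity
        show γ (n + 2) * ((((n:ℝ) + 2) ^ 2)⁻¹)
            ≤ (1 / 2 + M) * (γ (n + 2) / ((((n + 2).choose 2 : ℕ) : ℝ) + γ (n + 2)))
        calc γ (n + 2) * (((n:ℝ) + 2) ^ 2)⁻¹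
            = γ (n + 2) / ((n:ℝ) + 2) ^ 2 := by rw [div_eq_mul_inv]
          _ ≤ γ (n + 2) * (1 / 2 + M) / ((((n + 2).choose 2 : ℕ) : ℝ) + γ (n + 2)) := by
              rw [div_le_div_iff₀ hsq hdpos]
              calc γ (n + 2) * ((((n + 2).choose 2 : ℕ) : ℝ) + γ (n + 2))
                  ≤ γ (n + 2) * (((n:ℝ) + 2) ^ 2 * (1 / 2 + M)) :=
                    mul_le_mul_of_nonneg_left hd1 (hγnn n)
                _ = γ (n + 2) * (1 / 2 + M) * ((n:ℝ) + 2) ^ 2 := by ring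
          _ = (1 / 2 + M) * (γ (n + 2) / ((((n + 2).choose 2 : ℕ) : ℝ) + γ (n + 2))) := by
              ring
      refine Summable.of_nonneg_of_le hunn hcomp ?_
      exact h.mul_left _
    · intro h
      have hcomp : ∀ n : ℕ, γ (n + 2) / (((n + 2).choose 2 : ℝ) + γ (n + 2)) ≤ 4 * u n := by
        intro n
        have hd2 : ((n:ℝ) + 2) ^ 2 / 4 ≤ (((n + 2).choose 2 : ℕ) : ℝ) + γ (n + 2) := by
          rw [hchoose]; nlinarith [hγnn n, Nat.cast_nonneg (α := ℝ) n]
        have hdpos : (0:ℝ) < (((n + 2).choose 2 : ℕ) : ℝ) + γ (n + 2) := by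
          rw [hchoose]; nlinarith [hγnn n, Nat.cast_nonneg (α := ℝ) n]
        have hsq : (0:ℝ) < ((n:ℝ) + 2) ^ 2 / 4 := by positivity
        calc γ (n + 2) / ((((n + 2).choose 2 : ℕ) : ℝ) + γ (n + 2))
            ≤ γ (n + 2) / (((n:ℝ) + 2) ^ 2 / 4) := by
              apply div_le_div_of_nonneg_left (hγnn n) hsq hd2
          _ = 4 * u n := by
              simp only [hu]; field_simp
      have hnn2 : ∀ n : ℕ, 0 ≤ γ (n + 2) / (((n + 2).choose 2 : ℝ) + γ (n + 2)) := by
        intro n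
        have hdpos : (0:ℝ) < (((n + 2).choose 2 : ℕ) : ℝ) + γ (n + 2) := by
          rw [hchoose]; nlinarith [hγnn n, Nat.cast_nonneg (α := ℝ) n]
        exact div_nonneg (hγnn n) hdpos.le
      exact Summable.of_nonneg_of_le hnn2 hcomp (h.mul_left 4)
  -- Step D : express ∑' ofReal (u n) as a lintegral
  have hofu : ∀ n : ℕ, ENNReal.ofReal (u n) = ∫⁻ z in Set.Ioc (0:ℝ) 1, t n z ∂Λ := by
    intro n
    have h1 : ENNReal.ofReal (γ (n + 2)) = ∫⁻ z in Set.Ioc (0:ℝ) 1,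
        ENNReal.ofReal ((1 - (1 - z) ^ (n + 2)) / z) ∂Λ := by
      rw [hγ]
      exact ofReal_integral_eq_lintegral_ofReal (hInt (n + 2))
        ((ae_restrict_iff' measurableSet_Ioc).2
          (ae_of_all _ fun z hz => stmt7aux_nonneg hz _))
    calc ENNReal.ofReal (u n)
        = ENNReal.ofReal (γ (n + 2)) * ENNReal.ofReal ((((n:ℝ) + 2) ^ 2)⁻¹) :=
          ENNReal.ofReal_mul (hγnn n)
      _ = (∫⁻ z in Set.Ioc (0:ℝ) 1, ENNReal.ofReal ((1 - (1 - z) ^ (n + 2)) / z) ∂Λ)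
            * ENNReal.ofReal ((((n:ℝ) + 2) ^ 2)⁻¹) := by rw [h1]
      _ = ∫⁻ z in Set.Ioc (0:ℝ) 1, t n z ∂Λ := by
          rw [← lintegral_mul_const _ ((hmeasF (n + 2)).ennreal_ofReal)]
  have hlin : (∑' n : ℕ, ENNReal.ofReal (u n))
      = ∫⁻ z in Set.Ioc (0:ℝ) 1, (∑' n : ℕ, t n z) ∂Λ := by
    calc (∑' n : ℕ, ENNReal.ofReal (u n))
        = ∑' n : ℕ, ∫⁻ z in Set.Ioc (0:ℝ) 1, t n z ∂Λ := tsum_congr hofu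
      _ = ∫⁻ z in Set.Ioc (0:ℝ) 1, (∑' n : ℕ, t n z) ∂Λ :=
          (lintegral_tsum fun n => (hmeast n).aemeasurable).symm
  have hSmeas : Measurable fun z : ℝ => ∑' n : ℕ, t n z := Measurable.ennreal_tsum hmeast
  have hLmeas : Measurable fun z : ℝ => ENNReal.ofReal (-Real.log z) :=
    (Real.measurable_log.neg).ennreal_ofReal
  have hμfin : Λ (Set.Ioc (0:ℝ) 1) < ⊤ := measure_lt_top Λ _
  rw [stepC]
  constructor
  · intro h
    have h1 : (∑' n : ℕ, ENNReal.ofReal (u n)) ≠ ⊤ := by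
      rw [← ENNReal.ofReal_tsum_of_nonneg hunn h]
      exact ENNReal.ofReal_ne_top
    rw [hlin] at h1
    have hb : (∫⁻ z in Set.Ioc (0:ℝ) 1, ENNReal.ofReal (-Real.log z) ∂Λ)
        ≤ 2 * (∫⁻ z in Set.Ioc (0:ℝ) 1, (∑' n : ℕ, t n z) ∂Λ) + Λ (Set.Ioc 0 1) := by
      calc (∫⁻ z in Set.Ioc (0:ℝ) 1, ENNReal.ofReal (-Real.log z) ∂Λ)
          ≤ ∫⁻ z in Set.Ioc (0:ℝ) 1, (2 * (∑' n : ℕ, t n z) + 1) ∂Λ :=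
            lintegral_mono_ae ((ae_restrict_iff' measurableSet_Ioc).2
              (ae_of_all _ fun z hz => stmt7aux_lower hz))
        _ = 2 * (∫⁻ z in Set.Ioc (0:ℝ) 1, (∑' n : ℕ, t n z) ∂Λ) + Λ (Set.Ioc 0 1) := by
            rw [lintegral_add_right _ measurable_const, lintegral_const_mul 2 hSmeas,
              lintegral_const, Measure.restrict_apply_univ, one_mul]
    refine lt_of_le_of_lt hb ?_
    rw [ENNReal.add_lt_top]
    exact ⟨ENNReal.mul_lt_top (by simp) h1.lt_top, hμfin⟩
  · intro h
    have h2 : (∫⁻ z in Set.Ioc (0:ℝ) 1, (∑' n : ℕ, t n z) ∂Λ)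
        ≤ 2 * (∫⁻ z in Set.Ioc (0:ℝ) 1, ENNReal.ofReal (-Real.log z) ∂Λ)
          + 2 * Λ (Set.Ioc 0 1) := by
      calc (∫⁻ z in Set.Ioc (0:ℝ) 1, (∑' n : ℕ, t n z) ∂Λ)
          ≤ ∫⁻ z in Set.Ioc (0:ℝ) 1, (2 * ENNReal.ofReal (-Real.log z) + 2) ∂Λ :=
            lintegral_mono_ae ((ae_restrict_iff' measurableSet_Ioc).2
              (ae_of_all _ fun z hz => stmt7aux_upper hz))
        _ = 2 * (∫⁻ z in Set.Ioc (0:ℝ) 1, ENNReal.ofReal (-Real.log z) ∂Λ)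
            + 2 * Λ (Set.Ioc 0 1) := by
            rw [lintegral_add_right _ measurable_const, lintegral_const_mul 2 hLmeas,
              lintegral_const, Measure.restrict_apply_univ]
    have hfin : (∑' n : ℕ, ENNReal.ofReal (u n)) ≠ ⊤ := by
      rw [hlin]
      refine (lt_of_le_of_lt h2 ?_).ne
      rw [ENNReal.add_lt_top]
      exact ⟨ENNReal.mul_lt_top (by simp) h, ENNReal.mul_lt_top (by simp) hμfin⟩
    exact (ENNReal.summable_toReal hfin).congr fun n => ENNReal.toReal_ofReal (hunn n)
end

section
/- For every integer n ≥ 1 there is a constant C, depending only on n, with the following property: for every real N ≥ 1 and all independent integrable random variables T and U taking values in [0, N] almost surely and satisfying Var(T) ≤ N and Var(U) ≤ N, one has | E[(T+U)^n] − (E[T] + E[U])^n | ≤ C · N^{n−1}. -/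
open MeasureTheory Set ProbabilityTheory Finset

private lemma abs_pow_sub_pow_le' {a b M : ℝ} (ha : |a| ≤ M) (hb : |b| ≤ M) (k : ℕ) :
    |a ^ k - b ^ k| ≤ k * M ^ (k - 1) * |a - b| := by
  have hM : 0 ≤ M := le_trans (abs_nonneg a) ha
  rw [← geom_sum₂_mul, abs_mul]
  gcongr
  calc |∑ i ∈ range k, a ^ i * b ^ (k - 1 - i)|
      ≤ ∑ i ∈ range k, |a ^ i * b ^ (k - 1 - i)| := Finset.abs_sum_le_sum_abs _ _
    _ ≤ ∑ i ∈ range k, M ^ (k - 1) := by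
        apply Finset.sum_le_sum
        intro i hi
        rw [Finset.mem_range] at hi
        rw [abs_mul, abs_pow, abs_pow]
        calc |a| ^ i * |b| ^ (k - 1 - i) ≤ M ^ i * M ^ (k - 1 - i) :=
              mul_le_mul (pow_le_pow_left₀ (abs_nonneg a) ha i)
                (pow_le_pow_left₀ (abs_nonneg b) hb _) (by positivity) (by positivity)
          _ = M ^ (k - 1) := by rw [← pow_add]; congr 1; omega
    _ = k * M ^ (k - 1) := by rw [Finset.sum_const, Finset.card_range, nsmul_eq_mul]

private lemma taylor2 {a b M : ℝ} (ha : |a| ≤ M) (hb : |b| ≤ M) (n : ℕ) :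
    |a ^ n - b ^ n - n * b ^ (n - 1) * (a - b)| ≤ n ^ 2 * M ^ (n - 2) * (a - b) ^ 2 := by
  have hM : 0 ≤ M := le_trans (abs_nonneg a) ha
  have hsplit : (∑ i ∈ range n, a ^ i * b ^ (n - 1 - i)) - (n : ℝ) * b ^ (n - 1)
      = ∑ i ∈ range n, (a ^ i - b ^ i) * b ^ (n - 1 - i) := by
    have hb' : (n : ℝ) * b ^ (n - 1) = ∑ i ∈ range n, b ^ i * b ^ (n - 1 - i) := by
      rw [Finset.sum_congr rfl (fun i hi => ?_), Finset.sum_const, Finset.card_range,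
        nsmul_eq_mul]
      rw [Finset.mem_range] at hi
      rw [← pow_add]; congr 1; omega
    rw [hb', ← Finset.sum_sub_distrib]
    exact Finset.sum_congr rfl fun i _ => by ring
  have key : a ^ n - b ^ n - n * b ^ (n - 1) * (a - b)
      = (∑ i ∈ range n, (a ^ i - b ^ i) * b ^ (n - 1 - i)) * (a - b) := by
    rw [← geom_sum₂_mul a b n, ← hsplit]; ring
  rw [key, abs_mul]
  have hsum : |∑ i ∈ range n, (a ^ i - b ^ i) * b ^ (n - 1 - i)|
      ≤ n ^ 2 * M ^ (n - 2) * |a - b| := by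
    calc |∑ i ∈ range n, (a ^ i - b ^ i) * b ^ (n - 1 - i)|
        ≤ ∑ i ∈ range n, |(a ^ i - b ^ i) * b ^ (n - 1 - i)| :=
          Finset.abs_sum_le_sum_abs _ _
      _ ≤ ∑ i ∈ range n, (n : ℝ) * M ^ (n - 2) * |a - b| := by
          apply Finset.sum_le_sum
          intro i hi
          rw [Finset.mem_range] at hi
          rw [abs_mul, abs_pow]
          rcases Nat.eq_zero_or_pos i with rfl | hi1
          · simp only [pow_zero, sub_self, abs_zero, zero_mul]
            positivity
          · calc |a ^ i - b ^ i| * |b| ^ (n - 1 - i)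
                ≤ (i * M ^ (i - 1) * |a - b|) * M ^ (n - 1 - i) := by
                  gcongr <;> first
                    | exact abs_pow_sub_pow_le' ha hb i
                    | exact pow_le_pow_left₀ (abs_nonneg b) hb _
                    | positivity
              _ = (i : ℝ) * (M ^ (i - 1) * M ^ (n - 1 - i)) * |a - b| := by ring
              _ ≤ (n : ℝ) * M ^ (n - 2) * |a - b| := by
                  rw [← pow_add]
                  have : i - 1 + (n - 1 - i) = n - 2 := by omega
                  rw [this]
                  gcongr <;> exact_mod_cast hi.le
      _ = n ^ 2 * M ^ (n - 2) * |a - b| := by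
          rw [Finset.sum_const, Finset.card_range, nsmul_eq_mul]; ring
  calc |∑ i ∈ range n, (a ^ i - b ^ i) * b ^ (n - 1 - i)| * |a - b|
      ≤ (n ^ 2 * M ^ (n - 2) * |a - b|) * |a - b| := by gcongr
    _ = n ^ 2 * M ^ (n - 2) * (a - b) ^ 2 := by rw [mul_assoc, abs_mul_abs_self]; ring

/-- Moment estimate: for every `n ≥ 1` there is a constant `C = C(n)` such that for all
`N ≥ 1` and all independent integrable random variables `T, U` with values in `[0,N]` a.s.
and variances at most `N`, `|E[(T+U)^n] − (E[T]+E[U])^n| ≤ C N^{n−1}`. -/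
theorem stmt10 (n : ℕ) (hn : 1 ≤ n) :
    ∃ C : ℝ, ∀ (Ω : Type) (_ : MeasurableSpace Ω) (P : Measure Ω),
      IsProbabilityMeasure P →
      ∀ (T U : Ω → ℝ), IndepFun T U P → Integrable T P → Integrable U P →
      ∀ N : ℝ, 1 ≤ N →
      (∀ᵐ ω ∂P, T ω ∈ Set.Icc (0:ℝ) N) → (∀ᵐ ω ∂P, U ω ∈ Set.Icc (0:ℝ) N) →
      variance T P ≤ N → variance U P ≤ N →
      |(∫ ω, (T ω + U ω) ^ n ∂P) - ((∫ ω, T ω ∂P) + ∫ ω, U ω ∂P) ^ n|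
        ≤ C * N ^ (n - 1) := by
  refine ⟨(n : ℝ) ^ 2 * 2 ^ (n - 1), ?_⟩
  intro Ω _ P hP T U hTU hTi hUi N hN hTb hUb hTv hUv
  have hN0 : (0:ℝ) ≤ N := le_trans zero_le_one hN
  set S : Ω → ℝ := fun ω => T ω + U ω with hSdef
  have hSi : Integrable S P := hTi.add hUi
  have hSb : ∀ᵐ ω ∂P, S ω ∈ Set.Icc (0:ℝ) (2 * N) := by
    filter_upwards [hTb, hUb] with ω hT hU
    constructor
    · exact add_nonneg hT.1 hU.1
    · calc T ω + U ω ≤ N + N := add_le_add hT.2 hU.2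
        _ = 2 * N := by ring
  -- μ = mean of S
  have hμint : (∫ ω, S ω ∂P) = (∫ ω, T ω ∂P) + ∫ ω, U ω ∂P := integral_add hTi hUi
  set μ : ℝ := ∫ ω, S ω ∂P with hμdef
  -- bounds on μ
  have hμ0 : 0 ≤ μ := by
    apply integral_nonneg_of_ae
    filter_upwards [hSb] with ω h using h.1
  have hμ2N : μ ≤ 2 * N := by
    calc μ ≤ ∫ _, (2 * N) ∂P := by
          apply integral_mono_ae hSi (integrable_const _)
          filter_upwards [hSb] with ω h using h.2
      _ = 2 * N := by simp
  have habsμ : |μ| ≤ 2 * N := by rw [abs_of_nonneg hμ0]; exact hμ2N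
  -- Memℒp facts
  have hTm2 : MemLp T 2 P := by
    apply MemLp.of_bound hTi.aestronglyMeasurable N
    filter_upwards [hTb] with ω h
    rw [Real.norm_eq_abs, abs_of_nonneg h.1]; exact h.2
  have hUm2 : MemLp U 2 P := by
    apply MemLp.of_bound hUi.aestronglyMeasurable N
    filter_upwards [hUb] with ω h
    rw [Real.norm_eq_abs, abs_of_nonneg h.1]; exact h.2
  have hSm2 : MemLp S 2 P := hTm2.add hUm2
  have hvarS : variance S P ≤ 2 * N := by
    rw [hSdef]
    calc variance (T + U) P = variance T P + variance U P :=
          hTU.variance_add hTm2 hUm2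
      _ ≤ N + N := add_le_add hTv hUv
      _ = 2 * N := by ring
  have hvar_eq : variance S P = ∫ ω, (S ω - μ) ^ 2 ∂P := by
    rw [variance_eq_integral hSm2.aestronglyMeasurable.aemeasurable]
  -- integrability of S^n and the linear term
  have hSn_i : Integrable (fun ω => S ω ^ n) P := by
    apply Integrable.mono' (integrable_const ((2*N) ^ n)) (hSi.aestronglyMeasurable.pow n)
    filter_upwards [hSb] with ω h
    rw [Pi.pow_apply, Real.norm_eq_abs, abs_pow, abs_of_nonneg h.1]
    exact pow_le_pow_left₀ h.1 h.2 n
  have hlin_i : Integrable (fun ω => (n : ℝ) * μ ^ (n - 1) * (S ω - μ)) P :=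
    ((hSi.sub (integrable_const μ)).const_mul _)
  have hsq_i : Integrable (fun ω => (S ω - μ) ^ 2) P :=
    (hSm2.sub (memLp_const μ)).integrable_sq
  -- the linear term has zero expectation
  have hlin0 : ∫ ω, (n : ℝ) * μ ^ (n - 1) * (S ω - μ) ∂P = 0 := by
    rw [integral_const_mul, integral_sub hSi (integrable_const μ)]
    simp [hμdef]
  -- main estimate
  have key : |(∫ ω, S ω ^ n ∂P) - μ ^ n|
      ≤ (n : ℝ) ^ 2 * (2 * N) ^ (n - 2) * (2 * N) := by
    have h1 := integral_sub (hSn_i.sub (integrable_const (μ ^ n))) hlin_i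
    have h2 := integral_sub hSn_i (integrable_const (μ ^ n))
    simp only [Pi.sub_apply] at h1 h2
    have hrepr : (∫ ω, S ω ^ n ∂P) - μ ^ n
        = ∫ ω, (S ω ^ n - μ ^ n - (n : ℝ) * μ ^ (n - 1) * (S ω - μ)) ∂P := by
      rw [h1, h2, hlin0, integral_const]
      simp
    rw [hrepr]
    calc |∫ ω, (S ω ^ n - μ ^ n - (n : ℝ) * μ ^ (n - 1) * (S ω - μ)) ∂P|
        ≤ ∫ ω, |S ω ^ n - μ ^ n - (n : ℝ) * μ ^ (n - 1) * (S ω - μ)| ∂P :=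
          by
            simpa [Real.norm_eq_abs] using
              norm_integral_le_integral_norm
                (fun ω => S ω ^ n - μ ^ n - (n : ℝ) * μ ^ (n - 1) * (S ω - μ)) (μ := P)
      _ ≤ ∫ ω, (n : ℝ) ^ 2 * (2 * N) ^ (n - 2) * (S ω - μ) ^ 2 ∂P := by
          apply integral_mono_ae
          · exact ((hSn_i.sub (integrable_const _)).sub hlin_i).abs
          · exact hsq_i.const_mul _
          · filter_upwards [hSb] with ω h
            have habsS : |S ω| ≤ 2 * N := by
              rw [abs_of_nonneg h.1]; exact h.2
            exact taylor2 habsS habsμ n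
      _ = (n : ℝ) ^ 2 * (2 * N) ^ (n - 2) * ∫ ω, (S ω - μ) ^ 2 ∂P := by
          rw [integral_const_mul]
      _ ≤ (n : ℝ) ^ 2 * (2 * N) ^ (n - 2) * (2 * N) := by
          gcongr <;> first
            | positivity
            | (rw [← hvar_eq]; exact hvarS)
  -- convert S-integral to the statement's form
  have hform : (∫ ω, (T ω + U ω) ^ n ∂P) = ∫ ω, S ω ^ n ∂P := rfl
  have hμform : ((∫ ω, T ω ∂P) + ∫ ω, U ω ∂P) = μ := hμint.symm
  rw [hform, hμform]
  rcases eq_or_lt_of_le hn with h1 | h2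
  · -- n = 1
    subst h1
    simp only [pow_one]
    have : |(∫ ω, S ω ∂P) - μ| = 0 := by simp [hμdef]
    rw [this]
    positivity
  · -- n ≥ 2
    have hn2 : 2 ≤ n := h2
    calc |(∫ ω, S ω ^ n ∂P) - μ ^ n|
        ≤ (n : ℝ) ^ 2 * (2 * N) ^ (n - 2) * (2 * N) := key
      _ = (n : ℝ) ^ 2 * 2 ^ (n - 1) * N ^ (n - 1) := by
          rw [mul_pow]
          have e1 : (2:ℝ) ^ (n - 2) * 2 = 2 ^ (n - 1) := by
            rw [← pow_succ]; congr 1; omega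
          have e2 : N ^ (n - 2) * N = N ^ (n - 1) := by
            rw [← pow_succ]; congr 1; omega
          calc (n : ℝ) ^ 2 * (2 ^ (n - 2) * N ^ (n - 2)) * (2 * N)
              = (n : ℝ) ^ 2 * ((2:ℝ) ^ (n - 2) * 2) * (N ^ (n - 2) * N) := by ring
            _ = (n : ℝ) ^ 2 * 2 ^ (n - 1) * N ^ (n - 1) := by rw [e1, e2]
end

section
/- Let Λ be a finite Borel measure on [0,1] with Λ({0}) = 0 and total mass Λ([0,1]) > 0, and let Y be a random variable with law Λ([0,1])^{−1} Λ and U an independent uniform random variable on [0,1]. Then for every integer n ≥ 1, ∫_{(0,1]} (1 − (1−z)^n) z^{−1} Λ(dz) = n · Λ([0,1]) · E[(1 − UY)^{n−1}]. -/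
open MeasureTheory Set ProbabilityTheory

/-- Griffiths-type representation: with `Y` distributed as `Λ([0,1])^{−1}Λ` and `U` an
independent uniform on `[0,1]`, for every `n ≥ 1`,
`∫_{(0,1]} (1−(1−z)^n) z^{−1} Λ(dz) = n Λ([0,1]) E[(1−UY)^{n−1}]`. -/
theorem stmt15 (Λ : Measure ℝ) [IsFiniteMeasure Λ]
    (hΛsupp : Λ (Set.Icc (0:ℝ) 1)ᶜ = 0) (hΛ0 : Λ {0} = 0)
    (hΛpos : 0 < (Λ (Set.Icc (0:ℝ) 1)).toReal)
    {Ω : Type*} [MeasurableSpace Ω] (P : Measure Ω) [IsProbabilityMeasure P]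
    (U Y : Ω → ℝ) (hU : Measurable U) (hY : Measurable Y)
    (hUunif : Measure.map U P = volume.restrict (Set.Icc (0:ℝ) 1))
    (hYlaw : Measure.map Y P = (Λ Set.univ)⁻¹ • Λ)
    (hindep : IndepFun U Y P)
    (n : ℕ) (hn : 1 ≤ n) :
    (∫ z in Set.Ioc (0:ℝ) 1, (1 - (1 - z) ^ n) / z ∂Λ)
      = n * (Λ (Set.Icc (0:ℝ) 1)).toReal * ∫ ω, (1 - U ω * Y ω) ^ (n - 1) ∂P := by
  have hzero : (Λ (Set.Icc (0:ℝ) 1)).toReal ≠ 0 := ne_of_gt hΛpos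
  have hΛuniv : Λ Set.univ = Λ (Set.Icc (0:ℝ) 1) := by
    have h := measure_add_measure_compl (μ := Λ) (measurableSet_Icc (a := (0:ℝ)) (b := 1))
    rw [hΛsupp, add_zero] at h
    exact h.symm
  have hΛne0 : Λ Set.univ ≠ 0 := by
    rw [hΛuniv]; intro h; rw [h] at hΛpos; simp at hΛpos
  set ν := volume.restrict (Set.Icc (0:ℝ) 1) with hν
  set ρ := (Λ Set.univ)⁻¹ • Λ with hρ
  haveI : IsFiniteMeasure ν := ⟨by
    rw [hν, Measure.restrict_apply_univ, Real.volume_Icc]; simp⟩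
  haveI : IsFiniteMeasure ρ := ⟨by
    rw [hρ, Measure.smul_apply, smul_eq_mul, ENNReal.inv_mul_cancel hΛne0 (measure_ne_top _ _)]
    simp⟩
  set g : ℝ → ℝ := fun y => ∫ u, (1 - u * y) ^ (n - 1) ∂ν with hg
  -- null sets
  have hνcompl : ν (Set.Icc (0:ℝ) 1)ᶜ = 0 := by
    rw [hν, Measure.restrict_apply (measurableSet_Icc.compl)]
    simp
  have hρcompl : ρ (Set.Icc (0:ℝ) 1)ᶜ = 0 := by
    rw [hρ, Measure.smul_apply, hΛsupp]; simp
  -- probability side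
  have hpair : P.map (fun ω => (U ω, Y ω)) = ν.prod ρ := by
    have h := (indepFun_iff_map_prod_eq_prod_map_map hU.aemeasurable hY.aemeasurable).mp hindep
    rw [h, hUunif, hYlaw]
  have hfc : Continuous (fun p : ℝ × ℝ => (1 - p.1 * p.2) ^ (n - 1)) := by fun_prop
  have hprodnull : (ν.prod ρ) ((Set.Icc (0:ℝ) 1 ×ˢ Set.Icc (0:ℝ) 1)ᶜ) = 0 := by
    have hsub : (Set.Icc (0:ℝ) 1 ×ˢ Set.Icc (0:ℝ) 1)ᶜ ⊆
        ((Set.Icc (0:ℝ) 1)ᶜ ×ˢ (Set.univ : Set ℝ)) ∪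
          ((Set.univ : Set ℝ) ×ˢ (Set.Icc (0:ℝ) 1)ᶜ) := by
      intro p hp
      simp only [Set.mem_compl_iff, Set.mem_prod, not_and_or, Set.mem_union, Set.mem_univ,
        and_true, true_and] at hp ⊢
      tauto
    refine measure_mono_null hsub (measure_union_null ?_ ?_) <;>
      rw [Measure.prod_prod] <;> simp [hνcompl, hρcompl]
  have hae : ∀ᵐ p ∂(ν.prod ρ), p ∈ (Set.Icc (0:ℝ) 1 ×ˢ Set.Icc (0:ℝ) 1) :=
    mem_ae_iff.mpr hprodnull
  have hint : Integrable (fun p : ℝ × ℝ => (1 - p.1 * p.2) ^ (n - 1)) (ν.prod ρ) := by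
    refine (integrable_const (1:ℝ)).mono' hfc.aestronglyMeasurable ?_
    filter_upwards [hae] with p hp
    obtain ⟨⟨h0u, h1u⟩, h0y, h1y⟩ := hp
    have h0 : 0 ≤ p.1 * p.2 := mul_nonneg h0u h0y
    have h1 : p.1 * p.2 ≤ 1 := mul_le_one₀ h1u h0y h1y
    have hx0 : (0:ℝ) ≤ 1 - p.1 * p.2 := by linarith
    rw [Real.norm_eq_abs, abs_pow, abs_of_nonneg hx0]
    exact pow_le_one₀ hx0 (by linarith)
  have hE : ∫ ω, (1 - U ω * Y ω) ^ (n - 1) ∂P = ∫ y, g y ∂ρ := by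
    calc ∫ ω, (1 - U ω * Y ω) ^ (n - 1) ∂P
        = ∫ p : ℝ × ℝ, (1 - p.1 * p.2) ^ (n - 1) ∂(P.map fun ω => (U ω, Y ω)) :=
          (integral_map (hU.aemeasurable.prodMk hY.aemeasurable)
            hfc.aestronglyMeasurable).symm
      _ = ∫ p : ℝ × ℝ, (1 - p.1 * p.2) ^ (n - 1) ∂(ν.prod ρ) := by rw [hpair]
      _ = ∫ y, ∫ u, (1 - u * y) ^ (n - 1) ∂ν ∂ρ := integral_prod_symm _ hint
  -- pointwise computation
  have hpt : ∀ z ∈ Set.Ioc (0:ℝ) 1, (1 - (1 - z) ^ n) / z = n * g z := by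
    intro z hz
    have hz0 : z ≠ 0 := ne_of_gt hz.1
    have hn0 : (n:ℝ) ≠ 0 := Nat.cast_ne_zero.mpr (by omega)
    have key : ∫ u in (0:ℝ)..1, (1 - u * z) ^ (n - 1) = (1 - (1 - z) ^ n) / (n * z) := by
      have hderiv : ∀ u ∈ Set.uIcc (0:ℝ) 1,
          HasDerivAt (fun u : ℝ => -(1 - u * z) ^ n / (n * z)) ((1 - u * z) ^ (n - 1)) u := by
        intro u _
        have h1 : HasDerivAt (fun u : ℝ => 1 - u * z) (-z) u := by
          simpa using ((hasDerivAt_id u).mul_const z).const_sub 1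
        have h3 := (h1.pow n).neg.div_const ((n:ℝ) * z)
        exact h3.congr_deriv (by rw [div_eq_iff (mul_ne_zero hn0 hz0)]; ring)
      rw [intervalIntegral.integral_eq_sub_of_hasDerivAt hderiv
        ((by fun_prop : Continuous fun u : ℝ => (1 - u * z) ^ (n - 1)).intervalIntegrable 0 1)]
      field_simp
      ring
    have hgz : g z = (1 - (1 - z) ^ n) / (n * z) := by
      rw [hg]
      show (∫ u in Set.Icc (0:ℝ) 1, (1 - u * z) ^ (n - 1)) = _
      rw [integral_Icc_eq_integral_Ioc, ← intervalIntegral.integral_of_le zero_le_one, key]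
    rw [hgz]
    field_simp
  -- a.e. membership in Ioc
  have hIocnull : Λ (Set.Ioc (0:ℝ) 1)ᶜ = 0 := by
    have hsub : (Set.Ioc (0:ℝ) 1)ᶜ ⊆ (Set.Icc (0:ℝ) 1)ᶜ ∪ {0} := by
      intro x hx
      by_cases hmem : x ∈ Set.Icc (0:ℝ) 1
      · right
        simp only [Set.mem_compl_iff, Set.mem_Ioc, not_and_or, not_lt, not_le] at hx
        obtain ⟨h0, h1⟩ := hmem
        rcases hx with h | h
        · exact le_antisymm h h0
        · linarith
      · exact Or.inl hmem
    exact measure_mono_null hsub (measure_union_null hΛsupp hΛ0)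
  have hIocae : ∀ᵐ z ∂Λ, z ∈ Set.Ioc (0:ℝ) 1 := mem_ae_iff.mpr hIocnull
  have hres : Λ.restrict (Set.Ioc (0:ℝ) 1) = Λ := Measure.restrict_eq_self_of_ae_mem hIocae
  -- assemble
  have hLHS : (∫ z in Set.Ioc (0:ℝ) 1, (1 - (1 - z) ^ n) / z ∂Λ) = n * ∫ z, g z ∂Λ := by
    rw [show (∫ z in Set.Ioc (0:ℝ) 1, (1 - (1 - z) ^ n) / z ∂Λ)
        = ∫ z, (1 - (1 - z) ^ n) / z ∂Λ by conv_rhs => rw [← hres]]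
    rw [integral_congr_ae (g := fun z => (n:ℝ) * g z)
      (by filter_upwards [hIocae] with z hz using hpt z hz)]
    exact integral_const_mul _ _
  rw [hLHS, hE, hρ, integral_smul_measure, hΛuniv, ENNReal.toReal_inv, smul_eq_mul]
  field_simp
end
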